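/- In G(N,K,p) with all super-vertex sizes at most r, the probability that a fixed set A of m super-vertices forms a connected component is at most m^{m-2} (r² p)^{m-1} e^{-p m (N-m)}. -/

import Mathlib

set_option linter.unusedSectionVars false
set_option linter.unusedVariables false
set_option maxHeartbeats 1000000


open MeasureTheory ProbabilityTheory Filter Real
open scoped ENNReal Classical

abbrev EdgeIdx (N : ℕ) := {q : Fin N × Fin N // q.1 < q.2}

/-- The law of the random graph `G(N,K,p)`: each potential edge between the `k`-th and
`l`-th super-vertices (of sizes `size k`, `size l`) is present independently with
probability `1-(1-p)^(size k * size l)`. -/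
noncomputable def graphMeasure (N : ℕ) (size : Fin N → ℕ) (p : ℝ) :
    Measure (EdgeIdx N → Bool) :=
  Measure.pi fun e =>
    (PMF.bernoulli (1 - (1 - ENNReal.ofReal p) ^ (size e.1.1 * size e.1.2)).toNNReal
      (by simp)).toMeasure

/-- Super-vertex `k` is isolated in the configuration `ω`. -/
def Isolated {N : ℕ} (ω : EdgeIdx N → Bool) (k : Fin N) : Prop :=
  ∀ e : EdgeIdx N, (e.1.1 = k ∨ e.1.2 = k) → ω e = false

/-- The number of isolated super-vertices. -/
noncomputable def numIsolated {N : ℕ} (ω : EdgeIdx N → Bool) : ℕ :=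
  (Finset.univ.filter fun k => Isolated ω k).card

/-- The simple graph on super-vertices determined by a configuration `ω`. -/
def toGraph {N : ℕ} (ω : EdgeIdx N → Bool) : SimpleGraph (Fin N) where
  Adj k l := ∃ e : EdgeIdx N, ω e = true ∧
    ((e.1.1 = k ∧ e.1.2 = l) ∨ (e.1.1 = l ∧ e.1.2 = k))
  symm := by
    refine ⟨?_⟩
    intro k l h
    obtain ⟨e, he, hkl⟩ := h
    exact ⟨e, he, hkl.symm⟩
  loopless := by
    refine ⟨?_⟩
    intro k h
    obtain ⟨e, _, hkl⟩ := h
    have h2 := e.2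
    rcases hkl with ⟨ha, hb⟩ | ⟨ha, hb⟩ <;> rw [ha, hb] at h2 <;> exact lt_irrefl _ h2

/-- The super-vertices of `A` form a connected component of the graph. -/
def IsComponentOn {N : ℕ} (ω : EdgeIdx N → Bool) (A : Finset (Fin N)) : Prop :=
  ((toGraph ω).induce (A : Set (Fin N))).Connected ∧
  ∀ e : EdgeIdx N, ((e.1.1 ∈ A ∧ e.1.2 ∉ A) ∨ (e.1.1 ∉ A ∧ e.1.2 ∈ A)) → ω e = false


section Prufer

open Finset
open scoped Classical

variable {α : Type*} [Fintype α] [LinearOrder α] [DecidableEq α]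

/-- `f` is a parent map of a tree on `A` rooted at `a`. -/
def IsPTree (A : Finset α) (a : α) (f : α → α) : Prop :=
  (∀ v ∈ A.erase a, f v ∈ A ∧ f v ≠ v ∧ ∃ k, f^[k] v = a) ∧ ∀ v, v ∉ A.erase a → f v = v

namespace IsPTree

variable {A : Finset α} {a : α} {f : α → α}

lemma fix_of_not_mem (hf : IsPTree A a f) {v : α} (hv : v ∉ A.erase a) : f v = v :=
  hf.2 v hv

lemma fix_root (hf : IsPTree A a f) : f a = a := hf.2 a (by simp)

lemma mem_of_mem (hf : IsPTree A a f) (ha : a ∈ A) {v : α} (hv : v ∈ A) : f v ∈ A := by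
  by_cases h : v ∈ A.erase a
  · exact (hf.1 v h).1
  · rw [hf.2 v h]; exact hv

lemma iterate_mem (hf : IsPTree A a f) (ha : a ∈ A) {v : α} (hv : v ∈ A) (k : ℕ) :
    f^[k] v ∈ A := by
  induction k with
  | zero => simpa
  | succ n ih => rw [Function.iterate_succ_apply']; exact hf.mem_of_mem ha ih

lemma root_mem_image (hf : IsPTree A a f) (ha : a ∈ A) (hne : (A.erase a).Nonempty) :
    a ∈ (A.erase a).image f := by
  obtain ⟨v, hv⟩ := hne
  obtain ⟨k, hk⟩ := (hf.1 v hv).2.2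
  -- take the minimal k with f^[k] v = a
  have hex : ∃ k, f^[k] v = a := ⟨k, hk⟩
  classical
  set k0 := Nat.find hex with hk0
  have hk0a : f^[k0] v = a := Nat.find_spec hex
  have hk0pos : 0 < k0 := by
    rcases Nat.eq_zero_or_pos k0 with h | h
    · exfalso; rw [h] at hk0a; simp at hk0a
      exact (Finset.mem_erase.mp hv).1 hk0a
    · exact h
  have hprev : f^[k0 - 1] v ≠ a := Nat.find_min hex (by omega)
  have hprevA : f^[k0 - 1] v ∈ A := hf.iterate_mem ha (Finset.mem_of_mem_erase hv) _
  have : f (f^[k0 - 1] v) = a := by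
    rw [← Function.iterate_succ_apply' f, Nat.succ_eq_add_one]
    have : k0 - 1 + 1 = k0 := by omega
    rw [this, hk0a]
  exact Finset.mem_image.mpr ⟨_, Finset.mem_erase.mpr ⟨hprev, hprevA⟩, this⟩

lemma exists_leaf (hf : IsPTree A a f) (ha : a ∈ A) (h2 : 2 ≤ A.card) :
    ((A.erase a) \ (A.erase a).image f).Nonempty := by
  by_contra h
  rw [Finset.not_nonempty_iff_eq_empty, Finset.sdiff_eq_empty_iff_subset] at h
  have hne : (A.erase a).Nonempty := by
    rw [← Finset.card_pos, Finset.card_erase_of_mem ha]; omega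
  have haB : a ∈ (A.erase a).image f := hf.root_mem_image ha hne
  have hsub : A.erase a ⊆ ((A.erase a).image f).erase a := by
    intro x hx
    exact Finset.mem_erase.mpr ⟨(Finset.mem_erase.mp hx).1, h hx⟩
  have h1 := Finset.card_le_card hsub
  have h2' : (((A.erase a).image f).erase a).card ≤ (A.erase a).card - 1 := by
    rw [Finset.card_erase_of_mem haB]
    exact Nat.sub_le_sub_right (Finset.card_image_le) 1
  have h3 : 0 < (A.erase a).card := Finset.card_pos.mpr hne
  omega


lemma iterate_ne_leaf (hf : IsPTree A a f) (ha : a ∈ A) {v w : α}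
    (hv : v ∈ A.erase a) (hleaf : v ∉ (A.erase a).image f) (hw : w ∈ A) (hwv : w ≠ v) :
    ∀ k, f^[k] w ≠ v := by
  intro k
  induction k with
  | zero => simpa
  | succ n ih =>
    rw [Function.iterate_succ_apply']
    intro hcon
    set u := f^[n] w with hu
    have huA : u ∈ A := hf.iterate_mem ha hw n
    by_cases hcase : u ∈ A.erase a
    · exact hleaf (Finset.mem_image.mpr ⟨u, hcase, hcon⟩)
    · have : u = a := by
        by_contra h'
        exact hcase (Finset.mem_erase.mpr ⟨h', huA⟩)
      rw [this, hf.fix_root] at hcon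
      exact (Finset.mem_erase.mp hv).1 hcon.symm

lemma update_iterate (hf : IsPTree A a f) (ha : a ∈ A) {v w : α}
    (hv : v ∈ A.erase a) (hleaf : v ∉ (A.erase a).image f) (hw : w ∈ A) (hwv : w ≠ v) :
    ∀ k, (Function.update f v v)^[k] w = f^[k] w := by
  intro k
  induction k with
  | zero => simp
  | succ n ih =>
    rw [Function.iterate_succ_apply', Function.iterate_succ_apply', ih,
      Function.update_of_ne (hf.iterate_ne_leaf ha hv hleaf hw hwv n) _ f]

lemma leaf_removal (hf : IsPTree A a f) (ha : a ∈ A) {v : α}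
    (hv : v ∈ A.erase a) (hleaf : v ∉ (A.erase a).image f) :
    IsPTree (A.erase v) a (Function.update f v v) := by
  have hva : v ≠ a := (Finset.mem_erase.mp hv).1
  constructor
  · intro w hw
    have hw1 : w ≠ a := (Finset.mem_erase.mp hw).1
    have hw2 : w ∈ A.erase v := Finset.mem_of_mem_erase hw
    have hwv : w ≠ v := (Finset.mem_erase.mp hw2).1
    have hwA : w ∈ A := Finset.mem_of_mem_erase hw2
    have hwEr : w ∈ A.erase a := Finset.mem_erase.mpr ⟨hw1, hwA⟩
    have hupd : Function.update f v v w = f w := Function.update_of_ne hwv _ f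
    refine ⟨?_, ?_, ?_⟩
    · rw [hupd]
      refine Finset.mem_erase.mpr ⟨?_, (hf.1 w hwEr).1⟩
      intro hcon
      exact hleaf (Finset.mem_image.mpr ⟨w, hwEr, hcon⟩)
    · rw [hupd]; exact (hf.1 w hwEr).2.1
    · obtain ⟨k, hk⟩ := (hf.1 w hwEr).2.2
      exact ⟨k, by rw [hf.update_iterate ha hv hleaf hwA hwv k, hk]⟩
  · intro w hw
    by_cases hwv : w = v
    · rw [hwv]; simp
    · rw [Function.update_of_ne hwv _ f]
      refine hf.2 w ?_
      intro hcon
      have : w ∈ (A.erase v).erase a := by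
        rw [Finset.erase_right_comm]
        exact Finset.mem_erase.mpr ⟨hwv, hcon⟩
      exact hw this


end IsPTree

noncomputable def prufer (A : Finset α) (a : α) (f : α → α) : List α :=
  if h : A.card ≤ 2 then []
  else if hL : ((A.erase a) \ (A.erase a).image f).Nonempty then
    f (((A.erase a) \ (A.erase a).image f).min' hL) ::
      prufer (A.erase (((A.erase a) \ (A.erase a).image f).min' hL)) a
        (Function.update f (((A.erase a) \ (A.erase a).image f).min' hL)
          (((A.erase a) \ (A.erase a).image f).min' hL))
  else []
termination_by A.card
decreasing_by
  have hv := Finset.min'_mem _ hL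
  have hv2 : ((A.erase a) \ (A.erase a).image f).min' hL ∈ A :=
    Finset.mem_of_mem_erase (Finset.mem_sdiff.mp hv).1
  exact Finset.card_erase_lt_of_mem hv2

lemma prufer_of_le {A : Finset α} {a : α} {f : α → α} (h : A.card ≤ 2) :
    prufer A a f = [] := by
  rw [prufer, dif_pos h]

lemma prufer_of_gt {A : Finset α} {a : α} {f : α → α} (h : ¬ A.card ≤ 2)
    (hL : ((A.erase a) \ (A.erase a).image f).Nonempty) :
    prufer A a f = f (((A.erase a) \ (A.erase a).image f).min' hL) ::
      prufer (A.erase (((A.erase a) \ (A.erase a).image f).min' hL)) a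
        (Function.update f (((A.erase a) \ (A.erase a).image f).min' hL)
          (((A.erase a) \ (A.erase a).image f).min' hL)) := by
  rw [prufer, dif_neg h, dif_pos hL]

lemma prufer_subset (A : Finset α) : ∀ {a : α} {f : α → α}, a ∈ A → IsPTree A a f →
    ∀ u ∈ prufer A a f, u ∈ A := by
  induction A using Finset.strongInductionOn with
  | _ A ih =>
    intro a f ha hf u hu
    by_cases h : A.card ≤ 2
    · rw [prufer_of_le h] at hu; simp at hu
    · have hL := hf.exists_leaf ha (by omega)
      rw [prufer_of_gt h hL] at hu
      set v := ((A.erase a) \ (A.erase a).image f).min' hL with hvdef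
      have hvmem := Finset.min'_mem _ hL
      have hvA : v ∈ A.erase a := (Finset.mem_sdiff.mp hvmem).1
      have hvleaf : v ∉ (A.erase a).image f := (Finset.mem_sdiff.mp hvmem).2
      rcases List.mem_cons.mp hu with rfl | hu'
      · exact (hf.1 v hvA).1
      · have hsub : A.erase v ⊂ A :=
          Finset.erase_ssubset (Finset.mem_of_mem_erase hvA)
        have ha' : a ∈ A.erase v :=
          Finset.mem_erase.mpr ⟨fun h' => (Finset.mem_erase.mp hvA).1 h'.symm, ha⟩
        exact Finset.mem_of_mem_erase
          (ih _ hsub ha' (hf.leaf_removal ha hvA hvleaf) u hu')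

lemma prufer_length (A : Finset α) : ∀ {a : α} {f : α → α}, a ∈ A → IsPTree A a f →
    (prufer A a f).length = A.card - 2 := by
  induction A using Finset.strongInductionOn with
  | _ A ih =>
    intro a f ha hf
    by_cases h : A.card ≤ 2
    · rw [prufer_of_le h]; simp; omega
    · have hL := hf.exists_leaf ha (by omega)
      rw [prufer_of_gt h hL]
      set v := ((A.erase a) \ (A.erase a).image f).min' hL with hvdef
      have hvmem := Finset.min'_mem _ hL
      have hvA : v ∈ A.erase a := (Finset.mem_sdiff.mp hvmem).1
      have hvleaf : v ∉ (A.erase a).image f := (Finset.mem_sdiff.mp hvmem).2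
      have hsub : A.erase v ⊂ A :=
        Finset.erase_ssubset (Finset.mem_of_mem_erase hvA)
      have ha' : a ∈ A.erase v :=
        Finset.mem_erase.mpr ⟨fun h' => (Finset.mem_erase.mp hvA).1 h'.symm, ha⟩
      rw [List.length_cons, ih _ hsub ha' (hf.leaf_removal ha hvA hvleaf),
        Finset.card_erase_of_mem (Finset.mem_of_mem_erase hvA)]
      omega

lemma mem_prufer_iff (A : Finset α) : ∀ {a : α} {f : α → α}, a ∈ A → IsPTree A a f →
    ∀ u ∈ A.erase a, (u ∈ prufer A a f ↔ u ∈ (A.erase a).image f) := by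
  induction A using Finset.strongInductionOn with
  | _ A ih =>
    intro a f ha hf u hu
    by_cases h : A.card ≤ 2
    · rw [prufer_of_le h]
      simp only [List.not_mem_nil, false_iff]
      intro hcon
      obtain ⟨w, hw, hwu⟩ := Finset.mem_image.mp hcon
      have hcard : (A.erase a).card ≤ 1 := by
        rw [Finset.card_erase_of_mem ha]; omega
      have : w = u := by
        have := Finset.card_le_one.mp hcard w hw u hu
        exact this
      rw [this] at hwu
      exact (hf.1 u hu).2.1 hwu
    · have hL := hf.exists_leaf ha (by omega)
      rw [prufer_of_gt h hL]
      set v := ((A.erase a) \ (A.erase a).image f).min' hL with hvdef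
      have hvmem := Finset.min'_mem _ hL
      have hvA : v ∈ A.erase a := (Finset.mem_sdiff.mp hvmem).1
      have hvleaf : v ∉ (A.erase a).image f := (Finset.mem_sdiff.mp hvmem).2
      have hsub : A.erase v ⊂ A :=
        Finset.erase_ssubset (Finset.mem_of_mem_erase hvA)
      have ha' : a ∈ A.erase v :=
        Finset.mem_erase.mpr ⟨fun h' => (Finset.mem_erase.mp hvA).1 h'.symm, ha⟩
      have hf' := hf.leaf_removal ha hvA hvleaf
      have himg : (A.erase a).image f
          = insert (f v) (((A.erase a).erase v).image f) := by
        conv_lhs => rw [← Finset.insert_erase hvA]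
        rw [Finset.image_insert]
      have himg2 : ((A.erase v).erase a).image (Function.update f v v)
          = ((A.erase a).erase v).image f := by
        rw [Finset.erase_right_comm]
        apply Finset.image_congr
        intro x hx
        exact Function.update_of_ne (Finset.mem_erase.mp hx).1 _ f
      by_cases huv : u = v
      · subst huv
        simp only [List.mem_cons]
        constructor
        · rintro (h1 | h2)
          · exact absurd h1.symm (hf.1 v hvA).2.1
          · have := prufer_subset _ ha' hf' v h2
            exact absurd rfl (Finset.mem_erase.mp this).1
        · intro hcon
          exact absurd hcon hvleaf
      · have hu' : u ∈ (A.erase v).erase a := by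
          rw [Finset.erase_right_comm]
          exact Finset.mem_erase.mpr ⟨huv, hu⟩
        rw [List.mem_cons, ih _ hsub ha' hf' u hu', himg, himg2,
          Finset.mem_insert]

lemma prufer_injOn (A : Finset α) : ∀ {a : α} {f₁ f₂ : α → α}, a ∈ A →
    IsPTree A a f₁ → IsPTree A a f₂ → prufer A a f₁ = prufer A a f₂ → f₁ = f₂ := by
  induction A using Finset.strongInductionOn with
  | _ A ih =>
    intro a f₁ f₂ ha hf₁ hf₂ hcode
    by_cases h : A.card ≤ 2
    · funext w
      by_cases hw : w ∈ A.erase a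
      · have hA2 : A = {a, w} := by
          apply (Finset.eq_of_subset_of_card_le ?_ ?_).symm
          · intro x hx
            rcases Finset.mem_insert.mp hx with rfl | hx
            · exact ha
            · rw [Finset.mem_singleton.mp hx]
              exact Finset.mem_of_mem_erase hw
          · rw [Finset.card_insert_of_notMem (by
              simp only [Finset.mem_singleton]
              exact fun h' => (Finset.mem_erase.mp hw).1 h'.symm),
              Finset.card_singleton]
            have : 0 < (A.erase a).card := Finset.card_pos.mpr ⟨w, hw⟩
            rw [Finset.card_erase_of_mem ha] at this
            omega
        have key : ∀ g : α → α, IsPTree A a g → g w = a := by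
          intro g hg
          have h1 : g w ∈ A := (hg.1 w hw).1
          have h2 : g w ≠ w := (hg.1 w hw).2.1
          rw [hA2] at h1
          rcases Finset.mem_insert.mp h1 with h1 | h1
          · exact h1
          · exact absurd (Finset.mem_singleton.mp h1) h2
        rw [key f₁ hf₁, key f₂ hf₂]
      · rw [hf₁.2 w hw, hf₂.2 w hw]
    · have hL₁ := hf₁.exists_leaf ha (by omega)
      have hL₂ := hf₂.exists_leaf ha (by omega)
      have hLeq : (A.erase a) \ (A.erase a).image f₁
          = (A.erase a) \ (A.erase a).image f₂ := by
        ext u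
        simp only [Finset.mem_sdiff]
        constructor <;> rintro ⟨h1, h2⟩ <;> refine ⟨h1, fun hcon => h2 ?_⟩
        · rw [← mem_prufer_iff A ha hf₂ u h1, ← hcode,
            mem_prufer_iff A ha hf₁ u h1] at hcon
          exact hcon
        · rw [← mem_prufer_iff A ha hf₁ u h1, hcode,
            mem_prufer_iff A ha hf₂ u h1] at hcon
          exact hcon
      have hveq : ((A.erase a) \ (A.erase a).image f₁).min' hL₁
          = ((A.erase a) \ (A.erase a).image f₂).min' hL₂ := by
        congr 1
      set v := ((A.erase a) \ (A.erase a).image f₁).min' hL₁ with hvdef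
      have hvmem := Finset.min'_mem _ hL₁
      have hvA : v ∈ A.erase a := (Finset.mem_sdiff.mp hvmem).1
      have hvleaf₁ : v ∉ (A.erase a).image f₁ := (Finset.mem_sdiff.mp hvmem).2
      have hvmem₂ : v ∈ (A.erase a) \ (A.erase a).image f₂ := by
        rw [← hLeq]; exact hvmem
      have hvleaf₂ : v ∉ (A.erase a).image f₂ := (Finset.mem_sdiff.mp hvmem₂).2
      rw [prufer_of_gt h hL₁, prufer_of_gt h hL₂] at hcode
      rw [← hveq] at hcode
      have hhead : f₁ v = f₂ v := (List.cons.injEq _ _ _ _ ▸ hcode).1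
      have htail := (List.cons.injEq _ _ _ _ ▸ hcode).2
      have hsub : A.erase v ⊂ A :=
        Finset.erase_ssubset (Finset.mem_of_mem_erase hvA)
      have ha' : a ∈ A.erase v :=
        Finset.mem_erase.mpr ⟨fun h' => (Finset.mem_erase.mp hvA).1 h'.symm, ha⟩
      have hupd := ih _ hsub ha' (hf₁.leaf_removal ha hvA hvleaf₁)
        (hf₂.leaf_removal ha hvA hvleaf₂) htail
      funext w
      by_cases hwv : w = v
      · rw [hwv, hhead]
      · have := congrFun hupd w
        rwa [Function.update_of_ne hwv _ f₁, Function.update_of_ne hwv _ f₂] at this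

lemma card_ptree_le (A : Finset α) (a : α) (ha : a ∈ A) :
    (Finset.univ.filter (IsPTree A a)).card ≤ A.card ^ (A.card - 2) := by
  have hle : (Finset.univ.filter (IsPTree A a)).card
      ≤ (Fintype.piFinset (fun _ : Fin (A.card - 2) => A)).card := by
    refine Finset.card_le_card_of_injOn
      (fun f => fun i : Fin (A.card - 2) => (prufer A a f).getD i a) ?_ ?_
    · intro f hf
      have htree : IsPTree A a f := (Finset.mem_filter.mp hf).2
      rw [Finset.mem_coe, Fintype.mem_piFinset]
      intro i
      have hlen : (i : ℕ) < (prufer A a f).length := by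
        rw [prufer_length A ha htree]; exact i.2
      show (prufer A a f).getD i a ∈ A
      rw [List.getD_eq_getElem _ _ hlen]
      exact prufer_subset A ha htree _ (List.getElem_mem hlen)
    · intro f₁ hf₁ f₂ hf₂ heq
      have ht₁ : IsPTree A a f₁ := (Finset.mem_filter.mp (Finset.mem_coe.mp hf₁)).2
      have ht₂ : IsPTree A a f₂ := (Finset.mem_filter.mp (Finset.mem_coe.mp hf₂)).2
      apply prufer_injOn A ha ht₁ ht₂
      apply List.ext_getElem
      · rw [prufer_length A ha ht₁, prufer_length A ha ht₂]
      · intro i h1 h2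
        have hi : i < A.card - 2 := by rwa [prufer_length A ha ht₁] at h1
        have h3 := congrFun heq ⟨i, hi⟩
        simp only at h3
        rwa [List.getD_eq_getElem _ _ h1, List.getD_eq_getElem _ _ h2] at h3
  calc (Finset.univ.filter (IsPTree A a)).card
      ≤ (Fintype.piFinset (fun _ : Fin (A.card - 2) => A)).card := hle
    _ = A.card ^ (A.card - 2) := by
        rw [Fintype.card_piFinset]
        simp

end Prufer

section Edges

variable {N : ℕ}

/-- The canonical edge joining two distinct super-vertices. -/
def mkE (x y : Fin N) (h : x ≠ y) : EdgeIdx N :=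
  if hlt : x < y then ⟨(x, y), hlt⟩ else ⟨(y, x), h.lt_or_gt.resolve_left hlt⟩

lemma mkE_fst_snd (x y : Fin N) (h : x ≠ y) :
    (mkE x y h).1 = (x, y) ∨ (mkE x y h).1 = (y, x) := by
  unfold mkE
  split <;> simp

lemma eq_mkE {e : EdgeIdx N} {x y : Fin N} (h : x ≠ y)
    (he : e.1 = (x, y) ∨ e.1 = (y, x)) : e = mkE x y h := by
  unfold mkE
  have h2 := e.2
  rcases he with he | he
  · have hxy : x < y := by rw [he] at h2; exact h2
    rw [dif_pos hxy]
    exact Subtype.ext he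
  · have hyx : y < x := by rw [he] at h2; exact h2
    rw [dif_neg (asymm hyx)]
    exact Subtype.ext he

lemma toGraph_adj_true {ω : EdgeIdx N → Bool} {x y : Fin N} (h : (toGraph ω).Adj x y) :
    ω (mkE x y h.ne) = true := by
  obtain ⟨e, he, hc⟩ := id h
  have hor : e.1 = (x, y) ∨ e.1 = (y, x) := by
    rcases hc with ⟨h1, h2⟩ | ⟨h1, h2⟩
    · left; exact Prod.ext h1 h2
    · right; exact Prod.ext h1 h2
  exact (eq_mkE h.ne hor) ▸ he

/-- Tree-edge predicate: `e` joins some `v ∈ A.erase a` with its parent `f v`. -/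
def Pedge (A : Finset (Fin N)) (a : Fin N) (f : Fin N → Fin N) (e : EdgeIdx N) : Prop :=
  ∃ v ∈ A.erase a, (e.1.1 = v ∧ e.1.2 = f v) ∨ (e.1.1 = f v ∧ e.1.2 = v)

/-- Cross-edge predicate: `e` has exactly one endpoint in `A`. -/
def crossE (A : Finset (Fin N)) (e : EdgeIdx N) : Prop :=
  (e.1.1 ∈ A ∧ e.1.2 ∉ A) ∨ (e.1.1 ∉ A ∧ e.1.2 ∈ A)

/-- Per-edge constraint set. -/
def sset (A : Finset (Fin N)) (a : Fin N) (f : Fin N → Fin N) (e : EdgeIdx N) : Set Bool :=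
  if Pedge A a f e then {true} else if crossE A e then {false} else Set.univ

lemma card_Pedge {A : Finset (Fin N)} {a : Fin N} {f : Fin N → Fin N}
    (ha : a ∈ A) (hf : IsPTree A a f) :
    (Finset.univ.filter (Pedge A a f)).card = A.card - 1 := by
  have key : (A.erase a).card = (Finset.univ.filter (Pedge A a f)).card := by
    apply Finset.card_bij (fun v hv => mkE v (f v) ((hf.1 v hv).2.1.symm))
    · intro v hv
      rw [Finset.mem_filter]
      refine ⟨Finset.mem_univ _, v, hv, ?_⟩
      rcases mkE_fst_snd v (f v) ((hf.1 v hv).2.1.symm) with h | h <;> rw [h]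
      · left; exact ⟨rfl, rfl⟩
      · right; exact ⟨rfl, rfl⟩
    · intro v hv w hw heq
      by_contra hvw
      have e1 := mkE_fst_snd v (f v) ((hf.1 v hv).2.1.symm)
      have e2 := mkE_fst_snd w (f w) ((hf.1 w hw).2.1.symm)
      rw [heq] at e1
      have hkey : f v = w ∧ f w = v := by
        rcases e1 with h | h <;> rcases e2 with h' | h' <;>
          have hpq := h'.symm.trans h <;>
          rw [Prod.ext_iff] at hpq <;> obtain ⟨p1, p2⟩ := hpq
        · exact absurd p1.symm hvw
        · exact ⟨p2.symm, p1⟩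
        · exact ⟨p1.symm, p2⟩
        · exact absurd p2.symm hvw
      obtain ⟨k, hk⟩ := (hf.1 v hv).2.2
      have horb : ∀ j, f^[j] v = v ∨ f^[j] v = w := by
        intro j
        induction j with
        | zero => left; rfl
        | succ n ihn =>
          rw [Function.iterate_succ_apply']
          rcases ihn with h | h <;> rw [h]
          · right; exact hkey.1
          · left; exact hkey.2
      rcases horb k with h | h <;> rw [hk] at h
      · exact (Finset.mem_erase.mp hv).1 h.symm
      · exact (Finset.mem_erase.mp hw).1 h.symm
    · intro e he
      obtain ⟨v, hv, hc⟩ := (Finset.mem_filter.mp he).2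
      refine ⟨v, hv, ?_⟩
      refine (eq_mkE _ ?_).symm
      rcases hc with ⟨h1, h2⟩ | ⟨h1, h2⟩
      · left; exact Prod.ext h1 h2
      · right; exact Prod.ext h1 h2
  rw [← key, Finset.card_erase_of_mem ha]

lemma card_crossE (A : Finset (Fin N)) :
    (Finset.univ.filter (crossE A)).card = A.card * (N - A.card) := by
  have key : (A ×ˢ Aᶜ).card = (Finset.univ.filter (crossE A)).card := by
    have hne : ∀ q : Fin N × Fin N, q ∈ A ×ˢ Aᶜ → q.1 ≠ q.2 := by
      intro q hq hc
      obtain ⟨h1, h2⟩ := Finset.mem_product.mp hq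
      exact (Finset.mem_compl.mp h2) (hc ▸ h1)
    apply Finset.card_bij (fun q hq => mkE q.1 q.2 (hne q hq))
    · intro q hq
      obtain ⟨h1, h2⟩ := Finset.mem_product.mp hq
      rw [Finset.mem_filter]
      refine ⟨Finset.mem_univ _, ?_⟩
      rcases mkE_fst_snd q.1 q.2 (hne q hq) with h | h <;>
        unfold crossE <;> rw [h]
      · left; exact ⟨h1, Finset.mem_compl.mp h2⟩
      · right; exact ⟨Finset.mem_compl.mp h2, h1⟩
    · intro q hq q' hq' heq
      obtain ⟨h1, h2⟩ := Finset.mem_product.mp hq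
      obtain ⟨h1', h2'⟩ := Finset.mem_product.mp hq'
      have e1 := mkE_fst_snd q.1 q.2 (hne q hq)
      have e2 := mkE_fst_snd q'.1 q'.2 (hne q' hq')
      rw [heq] at e1
      rcases e1 with h | h <;> rcases e2 with h' | h' <;>
        have hpq := h'.symm.trans h <;>
        rw [Prod.ext_iff] at hpq <;> obtain ⟨p1, p2⟩ := hpq
      · exact Prod.ext p1.symm p2.symm
      · exact absurd (p2 ▸ h1') (Finset.mem_compl.mp h2)
      · exact absurd (show q.2 ∈ A by rw [← show q'.1 = q.2 from p1]; exact h1')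
          (Finset.mem_compl.mp h2)
      · exact Prod.ext p2.symm p1.symm
    · intro e he
      have hc := (Finset.mem_filter.mp he).2
      rcases hc with ⟨h1, h2⟩ | ⟨h1, h2⟩
      · refine ⟨(e.1.1, e.1.2), Finset.mem_product.mpr ⟨h1, Finset.mem_compl.mpr h2⟩, ?_⟩
        exact (eq_mkE _ (Or.inl rfl)).symm
      · refine ⟨(e.1.2, e.1.1), Finset.mem_product.mpr ⟨h2, Finset.mem_compl.mpr h1⟩, ?_⟩
        exact (eq_mkE _ (Or.inr rfl)).symm
  rw [← key, Finset.card_product, Finset.card_compl, Fintype.card_fin]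

end Edges

section Inclusion

variable {N : ℕ}

lemma component_subset_union (A : Finset (Fin N)) (hA : A.Nonempty) :
    {ω : EdgeIdx N → Bool | IsComponentOn ω A} ⊆
      ⋃ f ∈ Finset.univ.filter (IsPTree A (A.min' hA)),
        Set.univ.pi (sset A (A.min' hA) f) := by
  intro ω hω
  obtain ⟨hconn, hcross⟩ := hω
  set a := A.min' hA with hadef
  have haA : a ∈ A := A.min'_mem hA
  set G := (toGraph ω).induce (A : Set (Fin N)) with hGdef
  set root : (A : Set (Fin N)) := ⟨a, haA⟩ with hrootdef
  have key : ∀ v, v ∈ A.erase a → ∃ u, u ∈ A ∧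
      (toGraph ω).Adj v u ∧ ∀ (hu : u ∈ A) (hv2 : v ∈ A),
        G.dist ⟨u, hu⟩ root < G.dist ⟨v, hv2⟩ root := by
    intro v hv
    have hvA : v ∈ A := Finset.mem_of_mem_erase hv
    set vv : (A : Set (Fin N)) := ⟨v, hvA⟩ with hvvdef
    have hne : vv ≠ root := by
      intro hcon
      exact (Finset.mem_erase.mp hv).1 (congrArg Subtype.val hcon)
    have hreach : G.Reachable vv root := hconn.preconnected vv root
    have hdpos : 0 < G.dist vv root := hreach.pos_dist_of_ne hne
    obtain ⟨p, hp⟩ := hreach.exists_walk_length_eq_dist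
    have hvv2 : vv = ⟨v, hvA⟩ := rfl
    clear_value vv root
    cases p with
    | nil =>
      rw [SimpleGraph.Walk.length_nil] at hp
      rw [SimpleGraph.dist_self] at hdpos
      omega
    | cons hadj q =>
      rename_i u'
      refine ⟨u'.1, u'.2, ?_, fun hu hv2 => ?_⟩
      · have h2 : G.Adj ⟨v, hvA⟩ u' := hvv2 ▸ hadj
        exact h2
      · have h1 : G.dist u' root ≤ q.length := SimpleGraph.dist_le q
        rw [SimpleGraph.Walk.length_cons] at hp
        have he1 : (⟨u'.1, hu⟩ : (A : Set (Fin N))) = u' := Subtype.ext rfl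
        have he2 : (⟨v, hv2⟩ : (A : Set (Fin N))) = vv := hvv2.symm
        rw [he1, he2]
        omega
  classical
  set f : Fin N → Fin N :=
    fun v => if hv : v ∈ A.erase a then (key v hv).choose else v with hfdef
  have hfeq : ∀ v (hv : v ∈ A.erase a), f v = (key v hv).choose := by
    intro v hv
    simp only [hfdef, dif_pos hv]
  have hfA : ∀ v (hv : v ∈ A.erase a), f v ∈ A := by
    intro v hv
    rw [hfeq v hv]
    exact (key v hv).choose_spec.1
  have hfadj : ∀ v (hv : v ∈ A.erase a), (toGraph ω).Adj v (f v) := by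
    intro v hv
    rw [hfeq v hv]
    exact (key v hv).choose_spec.2.1
  have hfdist : ∀ v (hv : v ∈ A.erase a) (hv2 : v ∈ A) (hu : f v ∈ A),
      G.dist ⟨f v, hu⟩ root < G.dist ⟨v, hv2⟩ root := by
    intro v hv hv2 hu
    have he : (⟨f v, hu⟩ : (A : Set (Fin N)))
        = ⟨(key v hv).choose, (hfeq v hv) ▸ hu⟩ := Subtype.ext (hfeq v hv)
    rw [he]
    exact (key v hv).choose_spec.2.2 _ hv2
  have hft : IsPTree A a f := by
    refine ⟨fun v hv => ⟨hfA v hv, ?_, ?_⟩, fun v hv => dif_neg hv⟩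
    · exact fun hcon => (hfadj v hv).ne' (by rw [hcon])
    · have main : ∀ n, ∀ v, ∀ hvA : v ∈ A, G.dist ⟨v, hvA⟩ root ≤ n →
          ∃ k, f^[k] v = a := by
        intro n
        induction n with
        | zero =>
          intro v hvA hd
          by_cases hva : v = a
          · exact ⟨0, hva⟩
          · have hne : (⟨v, hvA⟩ : (A : Set (Fin N))) ≠ root :=
              fun hcon => hva (congrArg Subtype.val hcon)
            have := (hconn.preconnected _ root).pos_dist_of_ne hne
            omega
        | succ n ih =>
          intro v hvA hd
          by_cases hva : v = a
          · exact ⟨0, hva⟩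
          · have hv : v ∈ A.erase a := Finset.mem_erase.mpr ⟨hva, hvA⟩
            have hu : f v ∈ A := hfA v hv
            have hlt := hfdist v hv hvA hu
            obtain ⟨k, hk⟩ := ih (f v) hu (by omega)
            exact ⟨k + 1, by rw [Function.iterate_succ_apply, hk]⟩
      exact main (G.dist ⟨v, Finset.mem_of_mem_erase hv⟩ root) v
        (Finset.mem_of_mem_erase hv) le_rfl
  refine Set.mem_iUnion₂.mpr ⟨f, Finset.mem_filter.mpr ⟨Finset.mem_univ _, hft⟩, ?_⟩
  intro e _
  show ω e ∈ sset A a f e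
  unfold sset
  split_ifs with h1 h2
  · obtain ⟨v, hv, hcase⟩ := h1
    have hadj := hfadj v hv
    have : e = mkE v (f v) hadj.ne := by
      apply eq_mkE
      rcases hcase with ⟨e1, e2⟩ | ⟨e1, e2⟩
      · left; exact Prod.ext e1 e2
      · right; exact Prod.ext e1 e2
    rw [this, toGraph_adj_true hadj]
    rfl
  · rw [hcross e h2]
    rfl
  · exact Set.mem_univ _

end Inclusion

section MeasureBound

variable {N : ℕ}

lemma bernoulli_true_le {r : ℕ} {p : ℝ} (hp0 : 0 < p) (hp1 : p < 1) {n : ℕ}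
    (hn1 : 1 ≤ n) (hnr : n ≤ r ^ 2) :
    (PMF.bernoulli (1 - (1 - ENNReal.ofReal p) ^ n).toNNReal (by simp)).toMeasure {true}
      ≤ ENNReal.ofReal ((r : ℝ) ^ 2 * p) := by
  rw [PMF.toMeasure_apply_singleton _ _ (measurableSet_singleton _), PMF.bernoulli_apply]
  show (((1 - (1 - ENNReal.ofReal p) ^ n).toNNReal : ℝ≥0∞)) ≤ _
  rw [ENNReal.coe_toNNReal (ne_top_of_le_ne_top ENNReal.one_ne_top tsub_le_self)]
  show 1 - (1 - ENNReal.ofReal p) ^ n ≤ ENNReal.ofReal ((r : ℝ) ^ 2 * p)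
  have h1p : (1 : ℝ≥0∞) - ENNReal.ofReal p = ENNReal.ofReal (1 - p) := by
    rw [← ENNReal.ofReal_one, ← ENNReal.ofReal_sub _ hp0.le]
  rw [h1p, ← ENNReal.ofReal_pow (by linarith)]
  rw [tsub_le_iff_right, ← ENNReal.ofReal_add (mul_nonneg (by positivity) hp0.le) (pow_nonneg (by linarith) n)]
  rw [ENNReal.one_le_ofReal]
  have hber : 1 + (n : ℝ) * (-p) ≤ (1 + (-p)) ^ n := one_add_mul_le_pow (by linarith) n
  have hnr' : (n : ℝ) ≤ (r : ℝ) ^ 2 := by exact_mod_cast hnr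
  have hmul : (n : ℝ) * p ≤ (r : ℝ) ^ 2 * p := mul_le_mul_of_nonneg_right hnr' hp0.le
  have : (1 : ℝ) - (n : ℝ) * p ≤ (1 - p) ^ n := by
    calc (1 : ℝ) - (n : ℝ) * p = 1 + (n : ℝ) * (-p) := by ring
    _ ≤ (1 + (-p)) ^ n := hber
    _ = (1 - p) ^ n := by ring_nf
  linarith

lemma bernoulli_false_le {p : ℝ} (hp0 : 0 < p) (hp1 : p < 1) {n : ℕ} (hn1 : 1 ≤ n) :
    (PMF.bernoulli (1 - (1 - ENNReal.ofReal p) ^ n).toNNReal (by simp)).toMeasure {false}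
      ≤ ENNReal.ofReal (Real.exp (-p)) := by
  rw [PMF.toMeasure_apply_singleton _ _ (measurableSet_singleton _), PMF.bernoulli_apply]
  show ((((1 : NNReal) - (1 - (1 - ENNReal.ofReal p) ^ n).toNNReal : NNReal) : ℝ≥0∞)) ≤ _
  rw [ENNReal.coe_sub, ENNReal.coe_one,
    ENNReal.coe_toNNReal (ne_top_of_le_ne_top ENNReal.one_ne_top tsub_le_self)]
  show 1 - (1 - (1 - ENNReal.ofReal p) ^ n) ≤ ENNReal.ofReal (Real.exp (-p))
  have h1p : (1 : ℝ≥0∞) - ENNReal.ofReal p = ENNReal.ofReal (1 - p) := by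
    rw [← ENNReal.ofReal_one, ← ENNReal.ofReal_sub _ hp0.le]
  have hle1 : (1 - ENNReal.ofReal p) ^ n ≤ 1 := by
    apply pow_le_one' tsub_le_self
  rw [ENNReal.sub_sub_cancel ENNReal.one_ne_top hle1, h1p, ← ENNReal.ofReal_pow (by linarith)]
  apply ENNReal.ofReal_le_ofReal
  calc (1 - p) ^ n ≤ (1 - p) ^ 1 :=
        pow_le_pow_of_le_one (by linarith) (by linarith) hn1
  _ = 1 - p := pow_one _
  _ ≤ Real.exp (-p) := by linarith [Real.add_one_le_exp (-p)]

lemma measure_pi_sset_le (N r : ℕ) (size : Fin N → ℕ) (p : ℝ) (hp0 : 0 < p) (hp1 : p < 1)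
    (hrange : ∀ v, size v ∈ Finset.Icc 1 r) {A : Finset (Fin N)} {a : Fin N}
    {f : Fin N → Fin N} (ha : a ∈ A) (hf : IsPTree A a f) :
    graphMeasure N size p (Set.univ.pi (sset A a f)) ≤
      ENNReal.ofReal ((r : ℝ) ^ 2 * p) ^ (A.card - 1) *
      ENNReal.ofReal (Real.exp (-p)) ^ (A.card * (N - A.card)) := by
  classical
  rw [graphMeasure, Measure.pi_pi]
  set S := Finset.univ.filter (Pedge A a f) with hSdef
  set C := Finset.univ.filter (crossE A) with hCdef
  set g : EdgeIdx N → ℝ≥0∞ := fun e =>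
    if Pedge A a f e then ENNReal.ofReal ((r : ℝ) ^ 2 * p)
    else if crossE A e then ENNReal.ofReal (Real.exp (-p)) else 1 with hgdef
  have hnfact : ∀ e : EdgeIdx N, 1 ≤ size e.1.1 * size e.1.2 ∧
      size e.1.1 * size e.1.2 ≤ r ^ 2 := by
    intro e
    have h1 := Finset.mem_Icc.mp (hrange e.1.1)
    have h2 := Finset.mem_Icc.mp (hrange e.1.2)
    constructor
    · exact Nat.one_le_iff_ne_zero.mpr (Nat.mul_ne_zero (by omega) (by omega))
    · calc size e.1.1 * size e.1.2 ≤ r * r := Nat.mul_le_mul h1.2 h2.2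
      _ = r ^ 2 := (sq r).symm
  have hbound : ∀ e : EdgeIdx N,
      (PMF.bernoulli (1 - (1 - ENNReal.ofReal p) ^ (size e.1.1 * size e.1.2)).toNNReal
        (by simp)).toMeasure (sset A a f e) ≤ g e := by
    intro e
    simp only [hgdef]
    unfold sset
    split_ifs with h1 h2
    · exact bernoulli_true_le hp0 hp1 (hnfact e).1 (hnfact e).2
    · exact bernoulli_false_le hp0 hp1 (hnfact e).1
    · exact le_of_eq measure_univ
  have hdisj : Disjoint S C := by
    rw [Finset.disjoint_left]
    intro e heS heC
    obtain ⟨v, hv, hc⟩ := (Finset.mem_filter.mp heS).2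
    have hcr := (Finset.mem_filter.mp heC).2
    have hin : e.1.1 ∈ A ∧ e.1.2 ∈ A := by
      rcases hc with ⟨h1, h2⟩ | ⟨h1, h2⟩
      · exact ⟨h1 ▸ Finset.mem_of_mem_erase hv, h2 ▸ (hf.1 v hv).1⟩
      · exact ⟨h1 ▸ (hf.1 v hv).1, h2 ▸ Finset.mem_of_mem_erase hv⟩
    rcases hcr with ⟨_, h2⟩ | ⟨h1, _⟩
    · exact h2 hin.2
    · exact h1 hin.1
  calc (∏ e : EdgeIdx N, (PMF.bernoulli
      (1 - (1 - ENNReal.ofReal p) ^ (size e.1.1 * size e.1.2)).toNNReal (by simp)).toMeasure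
        (sset A a f e))
      ≤ ∏ e : EdgeIdx N, g e := Finset.prod_le_prod' fun e _ => hbound e
  _ = ∏ e ∈ S ∪ C, g e := by
      refine (Finset.prod_subset (Finset.subset_univ _) fun e _ he => ?_).symm
      simp only [hgdef]
      have h1 : ¬ Pedge A a f e := fun hc =>
        he (Finset.mem_union_left _ (Finset.mem_filter.mpr ⟨Finset.mem_univ _, hc⟩))
      have h2 : ¬ crossE A e := fun hc =>
        he (Finset.mem_union_right _ (Finset.mem_filter.mpr ⟨Finset.mem_univ _, hc⟩))
      simp [h1, h2]
  _ = (∏ e ∈ S, g e) * ∏ e ∈ C, g e := Finset.prod_union hdisj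
  _ = ENNReal.ofReal ((r : ℝ) ^ 2 * p) ^ S.card *
      ENNReal.ofReal (Real.exp (-p)) ^ C.card := by
      rw [Finset.prod_congr rfl (fun e he => ?_), Finset.prod_const]
      · congr 1
        rw [Finset.prod_congr rfl (fun e he => ?_), Finset.prod_const]
        have hP : ¬ Pedge A a f e := fun hc =>
          Finset.disjoint_left.mp hdisj (Finset.mem_filter.mpr ⟨Finset.mem_univ _, hc⟩) he
        have hC : crossE A e := (Finset.mem_filter.mp he).2
        simp only [hgdef]
        simp [hP, hC]
      · have hP : Pedge A a f e := (Finset.mem_filter.mp he).2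
        simp only [hgdef]
        simp [hP]
  _ = ENNReal.ofReal ((r : ℝ) ^ 2 * p) ^ (A.card - 1) *
      ENNReal.ofReal (Real.exp (-p)) ^ (A.card * (N - A.card)) := by
      rw [hSdef, hCdef, card_Pedge ha hf, card_crossE]

end MeasureBound

/-- in `G(N,K,p)` with all super-vertex sizes at most `r`, the probability
that a fixed set `A` of `m` super-vertices forms a connected component is at most
`m^(m-2) (r²p)^(m-1) e^(-p m (N-m))`. -/
theorem prob_component_le (N r : ℕ) (size : Fin N → ℕ) (p : ℝ) (hp0 : 0 < p) (hp1 : p < 1)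
    (hrange : ∀ v, size v ∈ Finset.Icc 1 r)
    (A : Finset (Fin N)) (m : ℕ) (hm : A.card = m) :
    graphMeasure N size p {ω | IsComponentOn ω A} ≤
      ENNReal.ofReal ((m : ℝ) ^ (m - 2) * ((r : ℝ) ^ 2 * p) ^ (m - 1) *
        Real.exp (-p * m * (N - m))) := by
  classical
  subst hm
  rcases A.eq_empty_or_nonempty with rfl | hA
  · have hempty : {ω : EdgeIdx N → Bool | IsComponentOn ω (∅ : Finset (Fin N))} = ∅ := by
      ext ω
      simp only [Set.mem_setOf_eq, Set.mem_empty_iff_false, iff_false]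
      rintro ⟨hconn, -⟩
      obtain ⟨⟨x, hx⟩⟩ := hconn.nonempty
      simp at hx
    rw [hempty, measure_empty]
    exact zero_le
  · have hmN : A.card ≤ N := by
      have := Finset.card_le_univ A
      simpa using this
    set a := A.min' hA with hadef
    have ha : a ∈ A := A.min'_mem hA
    set T := Finset.univ.filter (IsPTree A a) with hTdef
    set X : ℝ≥0∞ := ENNReal.ofReal ((r : ℝ) ^ 2 * p) ^ (A.card - 1) *
      ENNReal.ofReal (Real.exp (-p)) ^ (A.card * (N - A.card)) with hXdef
    have step1 : graphMeasure N size p {ω | IsComponentOn ω A} ≤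
        ∑ f ∈ T, graphMeasure N size p (Set.univ.pi (sset A a f)) :=
      le_trans (measure_mono (component_subset_union A hA))
        (MeasureTheory.measure_biUnion_finset_le _ _)
    have step2 : ∑ f ∈ T, graphMeasure N size p (Set.univ.pi (sset A a f)) ≤
        (T.card : ℝ≥0∞) * X := by
      calc ∑ f ∈ T, graphMeasure N size p (Set.univ.pi (sset A a f))
          ≤ ∑ _f ∈ T, X := Finset.sum_le_sum fun f hf => by
            rw [hXdef]
            exact measure_pi_sset_le N r size p hp0 hp1 hrange ha
              (Finset.mem_filter.mp hf).2
      _ = T.card • X := Finset.sum_const _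
      _ = (T.card : ℝ≥0∞) * X := nsmul_eq_mul _ _
    have step3 : (T.card : ℝ≥0∞) ≤ (A.card : ℝ≥0∞) ^ (A.card - 2) := by
      calc (T.card : ℝ≥0∞) ≤ ((A.card ^ (A.card - 2) : ℕ) : ℝ≥0∞) :=
            Nat.cast_le.mpr (card_ptree_le A a ha)
      _ = (A.card : ℝ≥0∞) ^ (A.card - 2) := by push_cast; ring
    refine le_trans step1 (le_trans step2 (le_trans (mul_le_mul_left step3 X) (le_of_eq ?_)))
    have hz : Real.exp (-p * (A.card : ℝ) * ((N : ℝ) - (A.card : ℝ)))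
        = Real.exp (-p) ^ (A.card * (N - A.card)) := by
      rw [← Real.exp_nat_mul]
      congr 1
      push_cast [Nat.cast_sub hmN]
      ring
    rw [hz, hXdef]
    have h1 : (0:ℝ) ≤ (r:ℝ) ^ 2 * p := mul_nonneg (by positivity) hp0.le
    have h2 : (0:ℝ) ≤ ((r:ℝ) ^ 2 * p) ^ (A.card - 1) := pow_nonneg h1 _
    have h3 : (0:ℝ) ≤ ((A.card : ℝ)) ^ (A.card - 2) := by positivity
    rw [ENNReal.ofReal_mul (mul_nonneg h3 h2), ENNReal.ofReal_mul h3,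
      ENNReal.ofReal_pow h1, ENNReal.ofReal_pow (Real.exp_nonneg _),
      ENNReal.ofReal_pow (by positivity : (0:ℝ) ≤ ((A.card : ℝ))),
      ENNReal.ofReal_natCast, mul_assoc]
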